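/- Let R be a projective-free ring. Then the power series ring R[[x]] is projective-free; that is, every finitely generated projective R[[x]]-module is free. -/

import Mathlib

open Polynomial

universe u

/-- The Jacobson radical of a ring: the intersection of all maximal (left) ideals. -/
def jacobsonRadical (R : Type*) [Ring R] : Ideal R := Ideal.jacobson (⊥ : Ideal R)

/-- `J^#(R) = {x ∈ R : x ^ n ∈ J(R) for some n ∈ ℕ}`. -/
def Jsharp (R : Type*) [Ring R] : Set R :=
  {x | ∃ n : ℕ, 0 < n ∧ x ^ n ∈ jacobsonRadical R}

/-- An element `a` is strongly `J^#`-clean if `a = e + u` with `e` idempotent,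
`u ∈ J^#(R)` and `e * a = a * e`. -/
def IsStronglyJsharpClean {R : Type*} [Ring R] (a : R) : Prop :=
  ∃ e : R, IsIdempotentElem e ∧ a - e ∈ Jsharp R ∧ e * a = a * e

/-- A commutative ring is projective-free if every finitely generated projective
module is free. -/
def IsProjectiveFree (R : Type u) [CommRing R] : Prop :=
  ∀ (M : Type u) [AddCommGroup M] [Module R M],
    Module.Finite R M → Module.Projective R M → Module.Free R M

/-- `𝕁_r`: monic polynomials congruent to `(t - r) ^ deg f` modulo `J^#(R)`. -/
def Jpoly {R : Type*} [CommRing R] (r : R) : Set R[X] :=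
  {f | f.Monic ∧ ∀ i, (f - (X - C r) ^ f.natDegree).coeff i ∈ Jsharp R}

universe v

namespace PSAux

open PowerSeries

lemma span_X_le_jacobson (R : Type u) [CommRing R] :
    Ideal.span {(PowerSeries.X : PowerSeries R)} ≤ Ideal.jacobson (⊥ : Ideal (PowerSeries R)) := by
  intro f hf
  rw [Ideal.mem_span_singleton, PowerSeries.X_dvd_iff] at hf
  rw [Ideal.mem_jacobson_bot]
  intro y
  rw [PowerSeries.isUnit_iff_constantCoeff]
  simp [hf]

lemma mem_smul_top {R : Type u} [CommRing R] {ι : Type v} [Fintype ι]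
    (v : ι → PowerSeries R) (h : ∀ j, (PowerSeries.constantCoeff (R := R)) (v j) = 0) :
    v ∈ (Ideal.span {(PowerSeries.X : PowerSeries R)} • ⊤ :
      Submodule (PowerSeries R) (ι → PowerSeries R)) := by
  choose g hg using fun j => PowerSeries.X_dvd_iff.mpr (h j)
  have hv : v = (PowerSeries.X : PowerSeries R) • g := by
    funext j; simp [hg j, Pi.smul_apply, smul_eq_mul]
  rw [hv]
  exact Submodule.smul_mem_smul (Ideal.mem_span_singleton_self _) trivial

lemma constantCoeff_eq_zero {R : Type u} [CommRing R] {M : Type v} [AddCommGroup M]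
    [Module (PowerSeries R) M] {m : M}
    (hm : m ∈ (Ideal.span {(PowerSeries.X : PowerSeries R)} • ⊤ : Submodule (PowerSeries R) M))
    (f : M →ₗ[PowerSeries R] PowerSeries R) : (PowerSeries.constantCoeff (R := R)) (f m) = 0 := by
  refine Submodule.smul_induction_on hm ?_ ?_
  · intro r hr n _
    rw [Ideal.mem_span_singleton] at hr
    obtain ⟨c, rfl⟩ := hr
    simp [map_smul, smul_eq_mul]
  · intro x y hx hy
    rw [map_add, map_add, hx, hy, add_zero]

end PSAux


set_option maxHeartbeats 2000000 in
/-- if `R` is projective-free then so is the power series ring `R[[x]]`. -/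
theorem isProjectiveFree_powerSeries {R : Type u} [CommRing R]
    (hR : IsProjectiveFree R) : IsProjectiveFree (PowerSeries R) := by
  classical
  intro M _ _ hfin hproj
  set A := PowerSeries R with hA
  set I : Ideal A := Ideal.span {PowerSeries.X} with hIdef
  have hIjac : I ≤ Ideal.jacobson ⊥ := PSAux.span_X_le_jacobson R
  set N : Submodule A M := I • ⊤ with hNdef
  letI : Module R (M ⧸ N) := Module.compHom (M ⧸ N) (algebraMap R A)
  have hsmul : ∀ (r : R) (x : M ⧸ N), r • x = (algebraMap R A r) • x := fun _ _ => rfl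
  have hCc : ∀ r : R, (PowerSeries.constantCoeff (R := R)) (algebraMap R A r) = r := by
    intro r; rw [← PowerSeries.C_eq_algebraMap, PowerSeries.constantCoeff_C]
  have hbar : ∀ (a : A) (y : M),
      a • (N.mkQ y) = ((PowerSeries.constantCoeff (R := R)) a) • (N.mkQ y) := by
    intro a y
    rw [hsmul, ← map_smul, ← map_smul, ← sub_eq_zero, ← map_sub, ← sub_smul,
      Submodule.mkQ_apply, Submodule.Quotient.mk_eq_zero]
    refine Submodule.smul_mem_smul ?_ trivial
    rw [Ideal.mem_span_singleton, PowerSeries.X_dvd_iff, map_sub, hCc, sub_self]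
  -- projectivity of M ⧸ N over R
  obtain ⟨mn, p, i, hpsurj, hiinj, hpi⟩ := Module.Finite.exists_comp_eq_id_of_projective A M
  letI : Module A (Fin mn → R) := Module.compHom _ ((PowerSeries.constantCoeff (R := R)))
  have hsmul2 : ∀ (a : A) (v : Fin mn → R), a • v = ((PowerSeries.constantCoeff (R := R))) a • v :=
    fun _ _ => rfl
  let g : M →ₗ[A] (Fin mn → R) :=
    { toFun := fun y j => (PowerSeries.constantCoeff (R := R)) (i y j)
      map_add' := by intro x y; funext j; simp
      map_smul' := by
        intro a y; funext j
        simp only [RingHom.id_apply, hsmul2, Pi.smul_apply, smul_eq_mul]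
        rw [map_smul]
        simp [smul_eq_mul] }
  have hker : N ≤ LinearMap.ker g := by
    intro y hy
    rw [LinearMap.mem_ker]
    funext j
    exact PSAux.constantCoeff_eq_zero hy ((LinearMap.proj j).comp i)
  let gbar : (M ⧸ N) →ₗ[A] (Fin mn → R) := N.liftQ g hker
  let iR : (M ⧸ N) →ₗ[R] (Fin mn → R) :=
    { toFun := gbar
      map_add' := map_add gbar
      map_smul' := by
        intro r x
        show gbar (r • x) = r • gbar x
        rw [hsmul, map_smul, hsmul2, hCc] }
  let CA : (Fin mn → R) → (Fin mn → A) := fun v j => algebraMap R A (v j)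
  have hCAadd : ∀ v w, CA (v + w) = CA v + CA w := by
    intro v w; funext j; simp [CA]
  have hCAsmul : ∀ (r : R) v, CA (r • v) = (algebraMap R A r) • CA v := by
    intro r v; funext j; simp [CA, Algebra.smul_def]
  let pR : (Fin mn → R) →ₗ[R] (M ⧸ N) :=
    { toFun := fun v => N.mkQ (p (CA v))
      map_add' := by
        intro v w
        show N.mkQ (p (CA (v + w))) = N.mkQ (p (CA v)) + N.mkQ (p (CA w))
        rw [hCAadd, map_add, map_add]
      map_smul' := by
        intro r v
        show N.mkQ (p (CA (r • v))) = r • N.mkQ (p (CA v))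
        rw [hCAsmul, map_smul, map_smul, hsmul] }
  have hsplit : ∀ x, pR (iR x) = x := by
    intro x
    obtain ⟨y, rfl⟩ := N.mkQ_surjective x
    have hg : iR (N.mkQ y) = fun j => (PowerSeries.constantCoeff (R := R)) (i y j) := by
      show gbar (N.mkQ y) = _
      rw [Submodule.mkQ_apply, Submodule.liftQ_apply]
      rfl
    rw [hg]
    show N.mkQ (p (CA fun j => (PowerSeries.constantCoeff (R := R)) (i y j))) = N.mkQ y
    have hdiff : i y - CA (fun j => (PowerSeries.constantCoeff (R := R)) (i y j))
        ∈ (I • ⊤ : Submodule A (Fin mn → A)) := by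
      refine PSAux.mem_smul_top _ fun j => ?_
      simp [CA, map_sub, hCc]
    have hpd : p (i y - CA (fun j => (PowerSeries.constantCoeff (R := R)) (i y j))) ∈ N := by
      rw [hNdef]
      have hmap : Submodule.map p (I • ⊤ : Submodule A (Fin mn → A)) ≤ I • ⊤ := by
        rw [Submodule.map_smul'']
        exact Submodule.smul_mono le_rfl le_top
      exact hmap ⟨_, hdiff, rfl⟩
    have hpy : p (i y) = y := by
      have h := congrArg (fun f => f y) hpi
      simpa using h
    have hz : N.mkQ (p (i y) - p (CA fun j => (PowerSeries.constantCoeff (R := R)) (i y j))) = 0 := by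
      rw [← map_sub, Submodule.mkQ_apply, Submodule.Quotient.mk_eq_zero]
      exact hpd
    rw [map_sub, hpy, sub_eq_zero] at hz
    exact hz.symm
  haveI hprojbar : Module.Projective R (M ⧸ N) :=
    Module.Projective.of_split iR pR (LinearMap.ext hsplit)
  -- finiteness of M ⧸ N over R
  haveI hfinA : Module.Finite A (M ⧸ N) := Module.Finite.of_surjective N.mkQ N.mkQ_surjective
  haveI hfinbar : Module.Finite R (M ⧸ N) := by
    obtain ⟨t, ht⟩ := Module.finite_def.mp hfinA
    refine Module.finite_def.mpr ⟨t, eq_top_iff.mpr fun x _ => ?_⟩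
    have hx : x ∈ Submodule.span A (↑t : Set (M ⧸ N)) := ht ▸ Submodule.mem_top
    refine Submodule.span_induction (fun y hy => Submodule.subset_span hy)
      (Submodule.zero_mem _) (fun a b _ _ ha hb => Submodule.add_mem _ ha hb) ?_ hx
    intro a y _ hy
    obtain ⟨z, rfl⟩ := N.mkQ_surjective y
    rw [hbar]
    exact Submodule.smul_mem _ _ hy
  have hfree : Module.Free R (M ⧸ N) := hR (M ⧸ N) hfinbar hprojbar
  haveI := hfree
  let ι := Module.Free.ChooseBasisIndex R (M ⧸ N)
  let b : Module.Basis ι R (M ⧸ N) := Module.Free.chooseBasis R (M ⧸ N)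
  choose lift hlift using fun k : ι => N.mkQ_surjective (b k)
  let φ : (ι → A) →ₗ[A] M := Fintype.linearCombination A lift
  have hφ : ∀ v : ι → A, φ v = ∑ k, v k • lift k := fun v =>
    Fintype.linearCombination_apply A lift v
  have key : ∀ v : ι → A,
      N.mkQ (φ v) = ∑ k, ((PowerSeries.constantCoeff (R := R)) (v k)) • b k := by
    intro v
    rw [hφ, map_sum]
    refine Finset.sum_congr rfl fun k _ => ?_
    rw [map_smul, hbar, hlift]
  -- surjectivity of φ
  have hsurj : Function.Surjective φ := by
    set Q : Submodule A M := LinearMap.range φ with hQ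
    haveI : Module.Finite A (M ⧸ Q) := Module.Finite.of_surjective Q.mkQ Q.mkQ_surjective
    have htop : (⊤ : Submodule A (M ⧸ Q)) = ⊥ := by
      refine Submodule.eq_bot_of_le_smul_of_le_jacobson_bot I ⊤
        (Module.finite_def.mp ‹Module.Finite A (M ⧸ Q)›) ?_ hIjac
      rintro x -
      obtain ⟨y, rfl⟩ := Q.mkQ_surjective x
      set v : ι → A := fun k => algebraMap R A (b.repr (N.mkQ y) k) with hv
      have h1 : N.mkQ (y - φ v) = 0 := by
        rw [map_sub, key, Submodule.mkQ_apply, sub_eq_zero]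
        have hck : ∀ k, (PowerSeries.constantCoeff (R := R)) (v k) = b.repr (N.mkQ y) k :=
          fun k => hCc _
        simp only [hck]
        exact (b.sum_repr (N.mkQ y)).symm
      have h2 : y - φ v ∈ N := by
        rwa [Submodule.mkQ_apply, Submodule.Quotient.mk_eq_zero] at h1
      have h3 : Q.mkQ (φ v) = 0 := by
        rw [Submodule.mkQ_apply, Submodule.Quotient.mk_eq_zero]
        exact ⟨v, rfl⟩
      have h4 : Submodule.map Q.mkQ N ≤ I • (⊤ : Submodule A (M ⧸ Q)) := by
        rw [hNdef, Submodule.map_smul'']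
        exact Submodule.smul_mono le_rfl le_top
      have h5 : Q.mkQ y = Q.mkQ (y - φ v) := by rw [map_sub, h3, sub_zero]
      rw [h5]
      exact h4 ⟨_, h2, rfl⟩
    intro y
    have hy : Q.mkQ y ∈ (⊥ : Submodule A (M ⧸ Q)) := htop ▸ Submodule.mem_top
    rw [Submodule.mem_bot, Submodule.mkQ_apply, Submodule.Quotient.mk_eq_zero] at hy
    exact hy
  -- injectivity of φ
  obtain ⟨s, hs⟩ := Module.projective_lifting_property φ LinearMap.id hsurj
  have hsφ : ∀ w, φ (s (φ w)) = φ w := by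
    intro w
    have h := congrArg (fun f => f (φ w)) hs
    simpa using h
  set K : Submodule A (ι → A) := LinearMap.ker φ with hK
  set T : (ι → A) →ₗ[A] (ι → A) := LinearMap.id - s ∘ₗ φ with hT
  have hTapp : ∀ w, T w = w - s (φ w) := fun w => rfl
  have hK1 : ∀ k ∈ K, T k = k := by
    intro k hk
    rw [LinearMap.mem_ker] at hk
    rw [hTapp, hk, map_zero, sub_zero]
  have hKrange : K = LinearMap.range T := by
    apply le_antisymm
    · exact fun k hk => ⟨k, hK1 k hk⟩
    · rintro x ⟨w, rfl⟩
      have : φ (T w) = 0 := by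
        rw [hTapp, map_sub, hsφ w, sub_self]
      exact LinearMap.mem_ker.mpr this
  have hKfg : K.FG := by
    rw [hKrange, LinearMap.range_eq_map]
    exact Submodule.FG.map _ (Module.finite_def.mp inferInstance)
  have hKle : K ≤ I • K := by
    intro k hk
    have h0 : ∑ j, ((PowerSeries.constantCoeff (R := R)) (k j)) • b j = 0 := by
      rw [← key k, LinearMap.mem_ker.mp hk, map_zero]
    have hc : ∀ j, (PowerSeries.constantCoeff (R := R)) (k j) = 0 :=
      Fintype.linearIndependent_iff.mp b.linearIndependent _ h0
    have hmem : k ∈ (I • ⊤ : Submodule A (ι → A)) := PSAux.mem_smul_top _ hc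
    have h6 : T k ∈ I • K := by
      rw [hKrange, LinearMap.range_eq_map, ← Submodule.map_smul'']
      exact ⟨k, hmem, rfl⟩
    rwa [hK1 k hk] at h6
  have hKbot : K = ⊥ := Submodule.eq_bot_of_le_smul_of_le_jacobson_bot I K hKfg hKle hIjac
  have hinj : Function.Injective φ := by
    rw [← LinearMap.ker_eq_bot]
    exact hKbot
  exact Module.Free.of_equiv (LinearEquiv.ofBijective φ ⟨hinj, hsurj⟩)
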